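/- arXiv:1011.4752 — 2 statements merged into one kernel-verified Lean document; each statement's English description precedes it below -/
import Mathlib

section
/- Let X_1,...,X_n be random variables taking values in [0,b] such that for every t, |E[X_t | X_1,...,X_{t-1}] - μ| ≤ C, where 0 < C < μ. Let S_n = X_1 + ... + X_n. Then for all a ≥ 0, P(S_n ≥ n(μ+C) + a) ≤ exp(-2(a(μ-C)/(b(μ+C)))²/n). -/
open MeasureTheory Filter

lemma bernoulli_D_pos {p : ℝ} (hp0 : 0 ≤ p) (hp1 : p ≤ 1) (t : ℝ) :
    0 < 1 - p + p * Real.exp t := by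
  rcases hp1.lt_or_eq with h | h
  · have : 0 ≤ p * Real.exp t := mul_nonneg hp0 (Real.exp_pos t).le
    linarith
  · subst h; simpa using Real.exp_pos t

lemma bernoulli_mgf (p : ℝ) (hp0 : 0 ≤ p) (hp1 : p ≤ 1) (t : ℝ) (ht : 0 ≤ t) :
    1 - p + p * Real.exp t ≤ Real.exp (p * t + t ^ 2 / 8) := by
  set D : ℝ → ℝ := fun t => 1 - p + p * Real.exp t with hDdef
  have hD : ∀ t, 0 < D t := fun t => bernoulli_D_pos hp0 hp1 t
  have hDd : ∀ t, HasDerivAt D (p * Real.exp t) t := fun t => by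
    exact ((Real.hasDerivAt_exp t).const_mul p).const_add (1 - p)
  set g : ℝ → ℝ := fun t => p * Real.exp t / D t with hgdef
  have hgd : ∀ t, HasDerivAt g (p * Real.exp t * (1 - p) / (D t) ^ 2) t := by
    intro t
    have h1 : HasDerivAt (fun t => p * Real.exp t) (p * Real.exp t) t :=
      (Real.hasDerivAt_exp t).const_mul p
    have := h1.div (hDd t) (hD t).ne'
    refine this.congr_deriv ?_
    have hne := (hD t).ne'
    simp only [hDdef]
    ring
  have hg01 : ∀ t, 0 ≤ g t ∧ g t ≤ 1 := by
    intro t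
    constructor
    · exact div_nonneg (mul_nonneg hp0 (Real.exp_pos t).le) (hD t).le
    · rw [div_le_one (hD t)]
      simp only [hDdef]
      linarith
  have hg0 : g 0 = p := by
    simp only [hgdef, hDdef, Real.exp_zero, mul_one]
    have h1 : 1 - p + p = 1 := by ring
    rw [h1, div_one]
  have h1g : ∀ t, 1 - g t = (1 - p) / D t := by
    intro t
    rw [eq_div_iff (hD t).ne']
    have hne := (hD t).ne'
    simp only [hgdef, hDdef] at *
    field_simp
    ring
  have hgd_le : ∀ t, p * Real.exp t * (1 - p) / (D t) ^ 2 ≤ 1 / 4 := by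
    intro t
    have hgg : p * Real.exp t * (1 - p) / (D t) ^ 2 = g t * (1 - g t) := by
      rw [h1g t, hgdef]
      rw [div_mul_div_comm, sq]
    rw [hgg]
    nlinarith [sq_nonneg (g t - 1 / 2)]
  set h : ℝ → ℝ := fun t => p + t / 4 - g t with hhdef
  have hhd : ∀ t, HasDerivAt h (1 / 4 - p * Real.exp t * (1 - p) / (D t) ^ 2) t := by
    intro t
    have h1 : HasDerivAt (fun t : ℝ => p + t / 4) (1 / 4) t := by
      simpa using ((hasDerivAt_id t).div_const 4).const_add p
    exact h1.sub (hgd t)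
  have hhmono : MonotoneOn h (Set.Ici (0 : ℝ)) := by
    refine monotoneOn_of_deriv_nonneg (convex_Ici 0)
      (fun t _ => ((hhd t).continuousAt).continuousWithinAt)
      (fun t _ => ((hhd t).differentiableAt).differentiableWithinAt) ?_
    intro t _
    rw [(hhd t).deriv]
    linarith [hgd_le t]
  have hh0 : h 0 = 0 := by simp [hhdef, hg0]
  have hhnn : ∀ t, 0 ≤ t → 0 ≤ h t := by
    intro t ht'
    have := hhmono Set.self_mem_Ici (Set.mem_Ici.2 ht') ht'
    rw [hh0] at this
    exact this
  set f : ℝ → ℝ := fun t => p * t + t ^ 2 / 8 - Real.log (D t) with hfdef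
  have hfd : ∀ t, HasDerivAt f (p + t / 4 - g t) t := by
    intro t
    have h2 : HasDerivAt (fun t : ℝ => p * t) p t := by
      simpa using (hasDerivAt_id t).const_mul p
    have h1 : HasDerivAt (fun t : ℝ => p * t + t ^ 2 / 8) (p + t / 4) t := by
      have := h2.add ((hasDerivAt_pow 2 t).div_const 8)
      refine this.congr_deriv ?_
      push_cast
      ring
    have h3 : HasDerivAt (fun t => Real.log (D t)) (p * Real.exp t / D t) t :=
      (hDd t).log (hD t).ne'
    exact h1.sub h3
  have hfmono : MonotoneOn f (Set.Ici (0 : ℝ)) := by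
    refine monotoneOn_of_deriv_nonneg (convex_Ici 0)
      (fun t _ => ((hfd t).continuousAt).continuousWithinAt)
      (fun t _ => ((hfd t).differentiableAt).differentiableWithinAt) ?_
    intro t htt
    rw [(hfd t).deriv]
    have := hhnn t (le_of_lt (by simpa using htt))
    simpa [hhdef] using this
  have hf0 : f 0 = 0 := by
    have : D 0 = 1 := by simp [hDdef]
    simp [hfdef, this]
  have hft : 0 ≤ f t := by
    have := hfmono Set.self_mem_Ici (Set.mem_Ici.2 ht) ht
    rw [hf0] at this
    exact this
  have hlog : Real.log (D t) ≤ p * t + t ^ 2 / 8 := by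
    simp only [hfdef] at hft; linarith
  calc D t ≤ Real.exp (Real.log (D t)) := by rw [Real.exp_log (hD t)]
    _ ≤ _ := Real.exp_le_exp.2 hlog

/-- Drifted Chernoff–Hoeffding upper tail: if `X 1, ..., X n` take values in `[0,b]` and the
conditional expectation of each given the past is within `C` of `μ` (`0 < C < μ`), then for
`a ≥ 0`, `P(S_n ≥ n(μ+C) + a) ≤ exp(-2(a(μ-C)/(b(μ+C)))²/n)`. -/
theorem drifted_chernoff_upper
    {Ω : Type*} [MeasurableSpace Ω] (P : Measure Ω) [IsProbabilityMeasure P]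
    (n : ℕ) (hn : 1 ≤ n) (X : ℕ → Ω → ℝ) (b μ C : ℝ) (hb : 0 < b)
    (hmeas : ∀ t, Measurable (X t))
    (hbound : ∀ t, ∀ᵐ ω ∂P, X t ω ∈ Set.Icc 0 b)
    (hC : 0 < C) (hCμ : C < μ)
    (hcond : ∀ t, t < n → ∀ᵐ ω ∂P,
      |(P[X t | ⨆ i ∈ Finset.range t, MeasurableSpace.comap (X i) inferInstance]) ω - μ| ≤ C)
    (a : ℝ) (ha : 0 ≤ a) :
    (P {ω | (n : ℝ) * (μ + C) + a ≤ ∑ t ∈ Finset.range n, X t ω}).toReal ≤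
      Real.exp (-2 * ((a * (μ - C)) / (b * (μ + C)))^2 / n) := by
  have hn0 : (0:ℝ) < (n:ℝ) := by exact_mod_cast hn
  have hμC : 0 < μ + C := by linarith
  have hbAll : ∀ᵐ ω ∂P, ∀ t, X t ω ∈ Set.Icc 0 b := ae_all_iff.2 hbound
  set s : ℝ := (n:ℝ) * (μ + C) + a with hs
  by_cases hpb : μ + C ≤ b
  case neg =>
    -- the event is null since S_n ≤ n b < s a.s.
    have hnull : P {ω | s ≤ ∑ t ∈ Finset.range n, X t ω} = 0 := by
      rw [measure_eq_zero_iff_ae_notMem]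
      filter_upwards [hbAll] with ω hω hle
      have hSn : ∑ t ∈ Finset.range n, X t ω ≤ (n:ℝ) * b := by
        calc ∑ t ∈ Finset.range n, X t ω ≤ ∑ _t ∈ Finset.range n, b :=
              Finset.sum_le_sum fun i _ => (hω i).2
          _ = (n:ℝ) * b := by simp [mul_comm]
      have h1 : (n:ℝ) * b < s := by
        have h2 : b < μ + C := lt_of_not_ge hpb
        have := mul_lt_mul_of_pos_left h2 hn0
        simp only [hs]; linarith
      linarith
    rw [hnull]
    simpa using Real.exp_nonneg _
  case pos =>
    set F : ℕ → MeasurableSpace Ω :=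
      fun t => ⨆ i ∈ Finset.range t, MeasurableSpace.comap (X i) inferInstance with hF
    have hFle : ∀ t, F t ≤ ‹MeasurableSpace Ω› := by
      intro t
      refine iSup_le fun i => iSup_le fun _ => ?_
      exact measurable_iff_comap_le.mp (hmeas i)
    have hXFk : ∀ i k, i ∈ Finset.range k → Measurable[F k] (X i) := by
      intro i k hik
      rw [measurable_iff_comap_le]
      exact le_biSup (fun i => MeasurableSpace.comap (X i) inferInstance) hik
    set lam : ℝ := 4 * a / ((n:ℝ) * b ^ 2) with hlam
    have hlam0 : 0 ≤ lam := by positivity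
    set p : ℝ := (μ + C) / b with hp
    have hp0 : 0 ≤ p := by positivity
    have hp1 : p ≤ 1 := by rw [hp, div_le_one hb]; exact hpb
    set B : ℝ := 1 - p + p * Real.exp (lam * b) with hB
    have hBpos : 0 < B := bernoulli_D_pos hp0 hp1 _
    set c : ℝ := (Real.exp (lam * b) - 1) / b with hc
    have hexp1 : (1:ℝ) ≤ Real.exp (lam * b) := by
      rw [← Real.exp_zero]; exact Real.exp_le_exp.2 (by positivity)
    have hc0 : 0 ≤ c := div_nonneg (by linarith) hb.le
    have hint : ∀ (f : Ω → ℝ) (M : ℝ), Measurable f → (∀ᵐ ω ∂P, |f ω| ≤ M) →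
        Integrable f P := fun f M hf hbd =>
      (integrable_const M).mono' hf.aestronglyMeasurable
        (by simpa [Real.norm_eq_abs] using hbd)
    set S : ℕ → Ω → ℝ := fun k ω => ∑ t ∈ Finset.range k, X t ω with hSdef
    have hSmeas : ∀ k, Measurable (S k) := fun k => Finset.measurable_sum _ fun i _ => hmeas i
    have hEmeas : ∀ k, Measurable fun ω => Real.exp (lam * S k ω) :=
      fun k => Real.measurable_exp.comp ((hSmeas k).const_mul lam)
    have hEbd : ∀ k, ∀ᵐ ω ∂P, |Real.exp (lam * S k ω)| ≤ Real.exp (lam * ((k:ℝ) * b)) := by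
      intro k
      filter_upwards [hbAll] with ω hω
      rw [abs_of_pos (Real.exp_pos _)]
      apply Real.exp_le_exp.2
      apply mul_le_mul_of_nonneg_left _ hlam0
      calc S k ω ≤ ∑ _t ∈ Finset.range k, b := Finset.sum_le_sum fun i _ => (hω i).2
        _ = (k:ℝ) * b := by simp [mul_comm]
    have hEint : ∀ k, Integrable (fun ω => Real.exp (lam * S k ω)) P :=
      fun k => hint _ _ (hEmeas k) (hEbd k)
    have hstep : ∀ k, k < n →
        ∫ ω, Real.exp (lam * S (k+1) ω) ∂P ≤ B * ∫ ω, Real.exp (lam * S k ω) ∂P := by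
      intro k hk
      have hXint : Integrable (X k) P := by
        refine hint _ b (hmeas k) ?_
        filter_upwards [hbound k] with ω hω
        exact abs_le.2 ⟨by linarith [hω.1], hω.2⟩
      set fk : Ω → ℝ := fun ω => Real.exp (lam * S k ω) with hfk
      set g : Ω → ℝ := fun ω => Real.exp (lam * X k ω) with hg
      have hfk_sm : StronglyMeasurable[F k] fk := by
        apply Measurable.stronglyMeasurable
        exact Real.measurable_exp.comp
          (Measurable.const_mul (Finset.measurable_sum _ fun i hi => hXFk i k hi) lam)
      have hg_int : Integrable g P := by
        refine hint _ (Real.exp (lam * b))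
          (Real.measurable_exp.comp ((hmeas k).const_mul lam)) ?_
        filter_upwards [hbound k] with ω hω
        rw [abs_of_pos (Real.exp_pos _)]
        exact Real.exp_le_exp.2 (mul_le_mul_of_nonneg_left hω.2 hlam0)
      have hprod : (fk * g) = fun ω => Real.exp (lam * S (k+1) ω) := by
        funext ω
        simp only [Pi.mul_apply, hfk, hg, hSdef]
        rw [← Real.exp_add]
        congr 1
        rw [Finset.sum_range_succ]
        ring
      have hfg_int : Integrable (fk * g) P := by rw [hprod]; exact hEint (k+1)
      have hcond_le : P[g | F k] ≤ᵐ[P] fun _ => B := by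
        have hlin : g ≤ᵐ[P] fun ω => 1 + c * X k ω := by
          filter_upwards [hbound k] with ω hω
          obtain ⟨hx0, hxb⟩ := hω
          have hθ0 : 0 ≤ X k ω / b := div_nonneg hx0 hb.le
          have hθ1 : X k ω / b ≤ 1 := (div_le_one hb).2 hxb
          have hconv := convexOn_exp.2 (Set.mem_univ (0:ℝ)) (Set.mem_univ (lam * b))
            (by linarith : (0:ℝ) ≤ 1 - X k ω / b) hθ0 (by ring)
          simp only [smul_eq_mul, mul_zero, zero_add, Real.exp_zero, mul_one] at hconv
          have harg : X k ω / b * (lam * b) = lam * X k ω := by field_simp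
          rw [harg] at hconv
          have hcx : c * X k ω = X k ω / b * (Real.exp (lam * b) - 1) := by
            rw [hc]; field_simp
          calc g ω ≤ 1 - X k ω / b + X k ω / b * Real.exp (lam * b) := hconv
            _ = 1 + c * X k ω := by rw [hcx]; ring
        have h1int : Integrable (fun ω => 1 + c * X k ω) P :=
          (integrable_const 1).add (hXint.const_mul c)
        have hmono := condExp_mono (m := F k) hg_int h1int hlin
        have hadd : P[fun ω => 1 + c * X k ω | F k]
            =ᵐ[P] fun ω => 1 + c * (P[X k | F k]) ω := by
          have e0 : (fun ω => 1 + c * X k ω) = (fun _ => (1:ℝ)) + (c • X k) := rfl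
          rw [e0]
          refine (condExp_add (μ := P) (m := F k) (integrable_const (1:ℝ))
            (hXint.smul c)).trans ?_
          have e2 := condExp_smul (μ := P) (m := F k) c (X k)
          have e3 : P[fun _ => (1:ℝ) | F k] = fun _ => (1:ℝ) := condExp_const (hFle k) 1
          filter_upwards [e2] with ω hω
          simp only [Pi.add_apply, e3, hω, Pi.smul_apply, smul_eq_mul]
        have hXle : ∀ᵐ ω ∂P, (P[X k | F k]) ω ≤ μ + C := by
          filter_upwards [hcond k hk] with ω hω
          linarith [(abs_le.1 hω).2]
        filter_upwards [hmono, hadd, hXle] with ω h1 h2 h3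
        calc (P[g | F k]) ω ≤ (P[fun ω => 1 + c * X k ω | F k]) ω := h1
          _ = 1 + c * (P[X k | F k]) ω := h2
          _ ≤ 1 + c * (μ + C) := by nlinarith
          _ = B := by rw [hB, hp, hc]; field_simp; ring
      have hmul : ∫ ω, Real.exp (lam * S (k+1) ω) ∂P
          = ∫ ω, fk ω * (P[g | F k]) ω ∂P := by
        have hpull := condExp_mul_of_stronglyMeasurable_left (μ := P) hfk_sm hfg_int hg_int
        calc ∫ ω, Real.exp (lam * S (k+1) ω) ∂P = ∫ ω, (fk * g) ω ∂P := by rw [hprod]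
          _ = ∫ ω, (P[fk * g | F k]) ω ∂P := (integral_condExp (μ := P) (hFle k) (f := fk * g)).symm
          _ = ∫ ω, fk ω * (P[g | F k]) ω ∂P := integral_congr_ae hpull
      have hle2 : ∫ ω, fk ω * (P[g | F k]) ω ∂P ≤ ∫ ω, fk ω * B ∂P := by
        apply integral_mono_of_nonneg
        · have hcg0 : (0:Ω → ℝ) ≤ᵐ[P] P[g | F k] :=
            condExp_nonneg (ae_of_all _ fun ω => (Real.exp_pos _).le)
          filter_upwards [hcg0] with ω hω
          exact mul_nonneg (Real.exp_pos _).le hω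
        · exact (hEint k).mul_const B
        · filter_upwards [hcond_le] with ω hω
          exact mul_le_mul_of_nonneg_left hω (Real.exp_pos _).le
      have hle3 : ∫ ω, fk ω * B ∂P = B * ∫ ω, fk ω ∂P := by
        rw [integral_mul_const]; ring
      rw [hmul]
      rw [hle3] at hle2
      exact hle2
    have hkey : ∀ k, k ≤ n → ∫ ω, Real.exp (lam * S k ω) ∂P ≤ B ^ k := by
      intro k
      induction k with
      | zero => intro _; simp [hSdef]
      | succ k ih =>
        intro hk1
        have hk : k < n := hk1
        calc ∫ ω, Real.exp (lam * S (k+1) ω) ∂P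
            ≤ B * ∫ ω, Real.exp (lam * S k ω) ∂P := hstep k hk
          _ ≤ B * B ^ k := mul_le_mul_of_nonneg_left (ih (le_of_lt hk)) hBpos.le
          _ = B ^ (k+1) := by ring
    have hmarkov : Real.exp (lam * s) * (P {ω | s ≤ S n ω}).toReal ≤ B ^ n := by
      have h1 := mul_meas_ge_le_integral_of_nonneg (μ := P)
        (ae_of_all _ fun ω => (Real.exp_pos (lam * S n ω)).le) (hEint n) (Real.exp (lam * s))
      have hsub : {ω | s ≤ S n ω} ⊆ {ω | Real.exp (lam * s) ≤ Real.exp (lam * S n ω)} :=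
        fun ω hω => Real.exp_le_exp.2 (mul_le_mul_of_nonneg_left hω hlam0)
      have h2 : (P {ω | s ≤ S n ω}).toReal
          ≤ (P {ω | Real.exp (lam * s) ≤ Real.exp (lam * S n ω)}).toReal :=
        ENNReal.toReal_mono (measure_ne_top P _) (measure_mono hsub)
      calc Real.exp (lam * s) * (P {ω | s ≤ S n ω}).toReal
          ≤ Real.exp (lam * s) *
            (P {ω | Real.exp (lam * s) ≤ Real.exp (lam * S n ω)}).toReal :=
            mul_le_mul_of_nonneg_left h2 (Real.exp_pos _).le
        _ ≤ ∫ ω, Real.exp (lam * S n ω) ∂P := h1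
        _ ≤ B ^ n := hkey n le_rfl
    have hfin : (P {ω | s ≤ S n ω}).toReal ≤ B ^ n * Real.exp (-(lam * s)) := by
      rw [Real.exp_neg, ← div_eq_mul_inv, le_div_iff₀ (Real.exp_pos _)]
      calc (P {ω | s ≤ S n ω}).toReal * Real.exp (lam * s)
          = Real.exp (lam * s) * (P {ω | s ≤ S n ω}).toReal := by ring
        _ ≤ B ^ n := hmarkov
    have hBle : B ≤ Real.exp (p * (lam * b) + (lam * b) ^ 2 / 8) :=
      bernoulli_mgf p hp0 hp1 (lam * b) (by positivity)
    have hBn : B ^ n ≤ Real.exp ((n:ℝ) * (p * (lam * b) + (lam * b) ^ 2 / 8)) := by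
      rw [Real.exp_nat_mul]
      exact pow_le_pow_left₀ hBpos.le hBle n
    have hmain : (P {ω | s ≤ S n ω}).toReal
        ≤ Real.exp ((n:ℝ) * (p * (lam * b) + (lam * b) ^ 2 / 8) - lam * s) := by
      calc (P {ω | s ≤ S n ω}).toReal ≤ B ^ n * Real.exp (-(lam * s)) := hfin
        _ ≤ Real.exp ((n:ℝ) * (p * (lam * b) + (lam * b) ^ 2 / 8)) * Real.exp (-(lam * s)) :=
            mul_le_mul_of_nonneg_right hBn (Real.exp_pos _).le
        _ = Real.exp ((n:ℝ) * (p * (lam * b) + (lam * b) ^ 2 / 8) - lam * s) := by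
            rw [← Real.exp_add]; ring_nf
    refine hmain.trans (Real.exp_le_exp.2 ?_)
    have heq : (n:ℝ) * (p * (lam * b) + (lam * b) ^ 2 / 8) - lam * s
        = -2 * (a ^ 2 / b ^ 2) / n := by
      rw [hlam, hp, hs]
      field_simp
      ring
    rw [heq]
    have h2ab : a * (μ - C) / (b * (μ + C)) ≤ a / b := by
      rw [div_le_div_iff₀ (by positivity) hb]
      have hab : 0 ≤ a * b := mul_nonneg ha hb.le
      nlinarith
    have h0ab : 0 ≤ a * (μ - C) / (b * (μ + C)) :=
      div_nonneg (mul_nonneg ha (by linarith)) (by positivity)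
    have hsq : (a * (μ - C) / (b * (μ + C))) ^ 2 ≤ a ^ 2 / b ^ 2 := by
      have := pow_le_pow_left₀ h0ab h2ab 2
      simpa [div_pow] using this
    exact (div_le_div_iff_of_pos_right hn0).2 (by linarith)
end

section
/- Let (K_i) be non-decreasing positive integers with K_i → ∞, and let α be a positive integer. Define γ = ⌈max{5α+1, e^{4α/3}}⌉. In the UCB meta-policy where at each round the policy maximizing X̂_j/i_j + √(3 ln n / i_j) is selected, after the round index i exceeds γ (i.e., when G(n) > K_γ), each of the two policies has been selected at least α times. -/
/-- UCB-type index rules eventually sample each arm: in the two-policy meta-algorithm where at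
each round of the main loop the policy maximizing `X̂_j/i_j + √(3 ln n / i_j)` is selected,
once the round index exceeds `γ = ⌈max{5α+1, e^{4α/3}}⌉`, each policy has been selected at
least `α` times. Here `cnt j i` counts selections of policy `j` in the first `i` loop rounds
(plus the one initialization play), `time i` is the total elapsed time after `i` loop rounds,
and `X̂ j i` is the accumulated sum of block sample means of policy `j` (rewards in `[0,1]`,
so `0 ≤ X̂ j i ≤ cnt j i`). -/
theorem ucb_samples_each_arm
    (K : ℕ → ℕ) (hKpos : ∀ i, 1 ≤ K i) (hKmono : Monotone K)
    (hKdiv : Filter.Tendsto K Filter.atTop Filter.atTop)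
    (α : ℕ) (hα : 1 ≤ α)
    (γ : ℕ) (hγ : γ = max (5 * α + 1) ⌈Real.exp (4 * α / 3)⌉₊)
    (sel : ℕ → Fin 2)
    (cnt : Fin 2 → ℕ → ℕ)
    (hcnt : ∀ j i, cnt j i = 1 + ((Finset.range i).filter (fun k => sel k = j)).card)
    (time : ℕ → ℕ)
    (htime : ∀ i, time i = ∑ k ∈ Finset.range (i + 2), K k)
    (Xhat : Fin 2 → ℕ → ℝ)
    (hXhat : ∀ j i, 0 ≤ Xhat j i ∧ Xhat j i ≤ cnt j i)
    (hrule : ∀ i j,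
      Xhat j i / cnt j i + Real.sqrt (3 * Real.log (time i) / cnt j i) ≤
        Xhat (sel i) i / cnt (sel i) i +
          Real.sqrt (3 * Real.log (time i) / cnt (sel i) i)) :
    ∀ i, γ < i → ∀ j, α ≤ cnt j i := by
  -- In `Fin 2`, "not equal to j" means "equal to 1 - j".
  have fin2 : ∀ (a b : Fin 2), ¬ a = b ↔ a = 1 - b := by decide
  have hcntpos : ∀ (j : Fin 2) (k : ℕ), 1 ≤ cnt j k := by
    intro j k; rw [hcnt]; omega
  have hmono : ∀ (j : Fin 2) (k : ℕ), cnt j k ≤ cnt j (k + 1) := by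
    intro j k
    rw [hcnt, hcnt]
    have hs : (Finset.range k).filter (fun k => sel k = j) ⊆
        (Finset.range (k + 1)).filter (fun k => sel k = j) :=
      Finset.filter_subset_filter _ (Finset.range_subset_range.2 (Nat.le_succ k))
    have h := Finset.card_le_card hs
    omega
  have htlb : ∀ k : ℕ, k + 2 ≤ time k := by
    intro k
    rw [htime]
    calc k + 2 = ∑ _l ∈ Finset.range (k + 2), 1 := by simp
    _ ≤ ∑ l ∈ Finset.range (k + 2), K l := Finset.sum_le_sum (fun l _ => hKpos l)
  -- the ceiling of exp grows by at least 2 per step of c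
  have hceil : ∀ c : ℕ, ⌈Real.exp (4 * (c : ℝ) / 3)⌉₊ + 2 ≤ ⌈Real.exp (4 * ((c : ℝ) + 1) / 3)⌉₊ := by
    intro c
    have h0 : (1 : ℝ) ≤ Real.exp (4 * (c : ℝ) / 3) := Real.one_le_exp (by positivity)
    have h3 : (3 : ℝ) ≤ Real.exp (4 / 3 : ℝ) := by
      have e1 : (2.7182818283 : ℝ) < Real.exp 1 := Real.exp_one_gt_d9
      have e2 : (1 / 3 : ℝ) + 1 ≤ Real.exp (1 / 3) := Real.add_one_le_exp (1 / 3 : ℝ)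
      have e3 : Real.exp (4 / 3 : ℝ) = Real.exp 1 * Real.exp (1 / 3) := by
        rw [← Real.exp_add]; norm_num
      nlinarith
    have hmul : Real.exp (4 * (c : ℝ) / 3) + 2 ≤ Real.exp (4 * ((c : ℝ) + 1) / 3) := by
      have e4 : Real.exp (4 * ((c : ℝ) + 1) / 3) = Real.exp (4 * (c : ℝ) / 3) * Real.exp (4 / 3) := by
        rw [← Real.exp_add]; ring_nf
      nlinarith
    have h5 : ⌈Real.exp (4 * (c : ℝ) / 3) + 2⌉₊ ≤ ⌈Real.exp (4 * ((c : ℝ) + 1) / 3)⌉₊ :=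
      Nat.ceil_le_ceil hmul
    have h6 : ⌈Real.exp (4 * (c : ℝ) / 3) + ((2 : ℕ) : ℝ)⌉₊ = ⌈Real.exp (4 * (c : ℝ) / 3)⌉₊ + 2 :=
      Nat.ceil_add_natCast (by positivity) 2
    push_cast at h6
    omega
  intro i hi j
  have hsum : ∀ k : ℕ, cnt j k + cnt (1 - j) k = k + 2 := by
    intro k
    rw [hcnt, hcnt]
    have h := Finset.card_filter_add_card_filter_not
      (s := Finset.range k) (p := fun l => sel l = j)
    have heq : (Finset.range k).filter (fun l => ¬ sel l = j)
        = (Finset.range k).filter (fun l => sel l = 1 - j) := by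
      apply Finset.filter_congr
      intro x _
      simp only [fin2 (sel x) j]
    rw [heq] at h
    simp only [Finset.card_range] at h
    omega
  -- main claim, by induction on c
  have key : ∀ c k : ℕ, max (5 * c + 1) ⌈Real.exp (4 * (c : ℝ) / 3)⌉₊ ≤ k → c ≤ cnt j k := by
    intro c
    induction c with
    | zero => intro k _; exact Nat.zero_le _
    | succ c ih =>
      intro k hk
      have hk1 : 5 * c + 6 ≤ k := le_trans (by omega : 5 * c + 6 ≤ max (5 * (c + 1) + 1) ⌈Real.exp (4 * ((c : ℕ) + 1 : ℕ) / 3 : ℝ)⌉₊) hk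
      obtain ⟨m, rfl⟩ : ∃ m, k = m + 1 := ⟨k - 1, by omega⟩
      have hm1 : 5 * c + 5 ≤ m := by omega
      have hk2 : ⌈Real.exp (4 * ((c : ℝ) + 1) / 3)⌉₊ ≤ m + 1 := by
        refine le_trans ?_ hk
        refine le_trans (le_of_eq ?_) (le_max_right _ _)
        push_cast
        ring_nf
      have hm2 : ⌈Real.exp (4 * (c : ℝ) / 3)⌉₊ + 1 ≤ m := by
        have := hceil c
        omega
      have hMc : max (5 * c + 1) ⌈Real.exp (4 * (c : ℝ) / 3)⌉₊ ≤ m := by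
        exact max_le (by omega) (by omega)
      have ihm := ih m hMc
      rcases Nat.lt_or_ge c (cnt j m) with h | h
      · exact le_trans h (hmono j m)
      · have hc : cnt j m = c := le_antisymm h ihm
        have hc1 : 1 ≤ c := by have := hcntpos j m; omega
        -- forcing: the rule must select arm j at round m
        have hsel : sel m = j := by
          by_contra hne
          have hne' : sel m = 1 - j := (fin2 _ _).1 hne
          have hr := hrule m j
          rw [hne'] at hr
          have hn2 : m + 2 ≤ time m := htlb m
          have hc' : 4 * c ≤ cnt (1 - j) m := by have := hsum m; omega
          have hcposR : (0 : ℝ) < (cnt j m : ℝ) := by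
            exact_mod_cast hcntpos j m
          have hc'posR : (0 : ℝ) < (cnt (1 - j) m : ℝ) := by
            exact_mod_cast hcntpos (1 - j) m
          set L := Real.log (time m : ℝ) with hLdef
          have hnlb : Real.exp (4 * (c : ℝ) / 3) < (time m : ℝ) := by
            have h1 : Real.exp (4 * (c : ℝ) / 3) ≤ (⌈Real.exp (4 * (c : ℝ) / 3)⌉₊ : ℝ) :=
              Nat.le_ceil _
            have h2 : ⌈Real.exp (4 * (c : ℝ) / 3)⌉₊ + 1 ≤ time m := by omega
            have h3 : ((⌈Real.exp (4 * (c : ℝ) / 3)⌉₊ : ℝ) + 1) ≤ (time m : ℝ) := by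
              exact_mod_cast h2
            linarith
          have hLlb : 4 * (c : ℝ) / 3 < L := by
            have htm : 0 < time m := by omega
            rw [hLdef, Real.lt_log_iff_exp_lt (by exact_mod_cast htm : (0 : ℝ) < (time m : ℝ))]
            exact hnlb
          have hcR : ((cnt j m : ℕ) : ℝ) = (c : ℝ) := by exact_mod_cast hc
          have hcposR' : (0 : ℝ) < (c : ℝ) := by exact_mod_cast hc1
          have hLpos : 0 < L := lt_trans (by positivity) hLlb
          -- main chain of inequalities
          have hXj := hXhat j m
          have hXj' := hXhat (1 - j) m
          have hdiv0 : 0 ≤ Xhat j m / (cnt j m : ℝ) := div_nonneg hXj.1 hcposR.le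
          have hdiv1 : Xhat (1 - j) m / (cnt (1 - j) m : ℝ) ≤ 1 :=
            div_le_one_of_le₀ hXj'.2 hc'posR.le
          have hmain : Real.sqrt (3 * L / (cnt j m : ℝ)) ≤
              1 + Real.sqrt (3 * L / (cnt (1 - j) m : ℝ)) := by
            nlinarith [hr, hdiv0, hdiv1]
          set t := Real.sqrt (3 * L / (cnt j m : ℝ)) with htdef
          have ht2 : 2 < t := by
            rw [htdef]
            rw [show (2 : ℝ) = Real.sqrt 4 by
              rw [show (4 : ℝ) = 2 ^ 2 by norm_num, Real.sqrt_sq (by norm_num)]]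
            apply Real.sqrt_lt_sqrt (by norm_num)
            rw [hcR, lt_div_iff₀ hcposR']
            linarith
          have htsq : t ^ 2 = 3 * L / (cnt j m : ℝ) := by
            rw [htdef, Real.sq_sqrt (by positivity)]
          have hb : Real.sqrt (3 * L / (cnt (1 - j) m : ℝ)) ≤ t / 2 := by
            have h1 : 3 * L / (cnt (1 - j) m : ℝ) ≤ 3 * L / (4 * (c : ℝ)) := by
              apply div_le_div_of_nonneg_left (by positivity) (by positivity)
              have : ((4 * c : ℕ) : ℝ) ≤ ((cnt (1 - j) m : ℕ) : ℝ) := by exact_mod_cast hc'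
              push_cast at this
              linarith
            have h2 : 3 * L / (4 * (c : ℝ)) = (t / 2) ^ 2 := by
              rw [div_pow, htsq, hcR]
              ring
            calc Real.sqrt (3 * L / (cnt (1 - j) m : ℝ))
                ≤ Real.sqrt ((t / 2) ^ 2) := by rw [← h2]; exact Real.sqrt_le_sqrt h1
              _ = t / 2 := Real.sqrt_sq (by positivity)
          linarith
        have hstep : cnt j (m + 1) = cnt j m + 1 := by
          rw [hcnt j (m + 1), hcnt j m, Finset.range_add_one, Finset.filter_insert, if_pos hsel,
            Finset.card_insert_of_notMem (by simp)]
          omega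
        omega
  have hfin : max (5 * α + 1) ⌈Real.exp (4 * (α : ℝ) / 3)⌉₊ ≤ i := by
    rw [← hγ]; omega
  exact key α i hfin
end
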